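/- arXiv:2204.05020 — 2 statements merged into one kernel-verified Lean document; each statement's English description precedes it below -/
import Mathlib

section
/- Assume M > 0. Then for every real number A > 0 the equation F(λ) = A has a unique solution λ in the interval (M, +∞). -/
open MeasureTheory Filter Set Topology


lemma intInt_of_bdd {w : ℝ → ℝ} (hw : AEStronglyMeasurable w volume) {B a b : ℝ}
    (hB : ∀ θ, |w θ| ≤ B) : IntervalIntegrable w volume a b := by
  rw [intervalIntegrable_iff]
  haveI : IsFiniteMeasure (volume.restrict (Set.uIoc a b)) :=
    ⟨by rw [Measure.restrict_apply_univ]; exact measure_Ioc_lt_top⟩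
  exact ⟨hw.restrict, HasFiniteIntegral.of_bounded (C := B)
    (ae_of_all _ fun θ => by simpa [Real.norm_eq_abs] using hB θ)⟩

lemma lipOfAbs {g : ℝ → ℝ} {K : ℝ} (h : ∀ a b, |g a - g b| ≤ K * |a - b|) :
    LipschitzWith (Real.toNNReal K) g :=
  LipschitzWith.of_dist_le_mul fun a b => by
    rw [Real.dist_eq, Real.dist_eq]
    exact (h a b).trans (mul_le_mul_of_nonneg_right (Real.le_coe_toNNReal K) (abs_nonneg _))

lemma slope_tend {f : ℝ → ℝ} {x d : ℝ} (hf : HasDerivAt f d x) :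
    Tendsto (fun n : ℕ => (f (x + ((n : ℝ) + 1)⁻¹) - f x) / ((n : ℝ) + 1)⁻¹) atTop (𝓝 d) := by
  have h1 := hasDerivAt_iff_tendsto_slope.1 hf
  have hu : Tendsto (fun n : ℕ => ((n : ℝ) + 1)⁻¹) atTop (𝓝 0) :=
    tendsto_one_div_add_atTop_nhds_zero_nat.congr (by intro n; rw [one_div])
  have hx : Tendsto (fun n : ℕ => x + ((n : ℝ) + 1)⁻¹) atTop (𝓝[≠] x) := by
    apply tendsto_nhdsWithin_of_tendsto_nhds_of_eventually_within
    · simpa using tendsto_const_nhds.add hu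
    · exact Eventually.of_forall fun n => by
        have h : (0:ℝ) < ((n : ℝ) + 1)⁻¹ := by positivity
        simp only [mem_compl_iff, mem_singleton_iff]
        intro hc
        nlinarith [hc]
  have h2 := h1.comp hx
  refine h2.congr fun n => ?_
  show slope f x (x + ((n:ℝ)+1)⁻¹) = _
  rw [slope_def_field]
  congr 1
  ring

/-- FTC for Lipschitz functions with a.e. derivative. -/
lemma ftc_lip {T : ℝ} {g h : ℝ → ℝ} {K : NNReal} (hg : LipschitzWith K g)
    (hd : ∀ᵐ θ ∂(volume : Measure ℝ), HasDerivAt g (h θ) θ) :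
    ∫ θ in (0:ℝ)..T, h θ = g T - g 0 := by
  have hgc : Continuous g := hg.continuous
  set Φ : ℝ → ℝ := fun x => ∫ t in (0:ℝ)..x, g t with hΦdef
  have hΦd : ∀ x : ℝ, HasDerivAt Φ (g x) x := fun x =>
    intervalIntegral.integral_hasDerivAt_right (hgc.intervalIntegrable _ _)
      (hgc.stronglyMeasurableAtFilter _ _) hgc.continuousAt
  set u : ℕ → ℝ := fun n => ((n : ℝ) + 1)⁻¹ with hu_def
  have hupos : ∀ n, 0 < u n := fun n => by positivity
  -- the integral identity for each n
  have key : ∀ n, (∫ θ in (0:ℝ)..T, (g (θ + u n) - g θ) / u n)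
      = (Φ (T + u n) - Φ T) / u n - (Φ (0 + u n) - Φ 0) / u n := by
    intro n
    have hint1 : IntervalIntegrable (fun θ => g (θ + u n)) volume 0 T :=
      (hgc.comp (continuous_add_right (u n))).intervalIntegrable _ _
    have hint2 : IntervalIntegrable g volume 0 T := hgc.intervalIntegrable _ _
    have h1 : (∫ θ in (0:ℝ)..T, g (θ + u n)) = ∫ θ in (u n)..(T + u n), g θ := by
      simpa using intervalIntegral.integral_comp_add_right g (u n)
    have h2 : (∫ θ in (u n)..(T + u n), g θ) = Φ (T + u n) - Φ (u n) :=
      (intervalIntegral.integral_interval_sub_left (hgc.intervalIntegrable _ _)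
        (hgc.intervalIntegrable _ _)).symm
    have h3 : (∫ θ in (0:ℝ)..T, g θ) = Φ T := rfl
    have h4 : Φ 0 = 0 := intervalIntegral.integral_same
    calc (∫ θ in (0:ℝ)..T, (g (θ + u n) - g θ) / u n)
        = (∫ θ in (0:ℝ)..T, (g (θ + u n) - g θ)) / u n := by
          rw [← intervalIntegral.integral_div]
      _ = ((∫ θ in (0:ℝ)..T, g (θ + u n)) - ∫ θ in (0:ℝ)..T, g θ) / u n := by
          rw [intervalIntegral.integral_sub hint1 hint2]
      _ = ((Φ (T + u n) - Φ (u n)) - Φ T) / u n := by rw [h1, h2, h3]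
      _ = (Φ (T + u n) - Φ T) / u n - (Φ (0 + u n) - Φ 0) / u n := by
          rw [h4]; ring_nf
  have habs : ∀ n, ∀ θ : ℝ, |(g (θ + u n) - g θ) / u n| ≤ (K : ℝ) := by
    intro n θ
    rw [abs_div, abs_of_pos (hupos n), div_le_iff₀ (hupos n)]
    have := hg.dist_le_mul (θ + u n) θ
    rw [Real.dist_eq, Real.dist_eq] at this
    simpa [abs_of_pos (hupos n)] using this
  have hlim1 : Tendsto (fun n => ∫ θ in (0:ℝ)..T, (g (θ + u n) - g θ) / u n) atTop
      (𝓝 (∫ θ in (0:ℝ)..T, h θ)) := by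
    apply intervalIntegral.tendsto_integral_filter_of_dominated_convergence
      (fun _ => (K : ℝ))
    · exact Eventually.of_forall fun n =>
        (((hgc.comp (continuous_add_right (u n))).sub hgc).div_const _).aestronglyMeasurable.restrict
    · exact Eventually.of_forall fun n => ae_of_all _ fun θ _ => by
        rw [Real.norm_eq_abs]; exact habs n θ
    · exact intervalIntegrable_const
    · exact hd.mono fun θ hθ _ => slope_tend hθ
  have hlim2 : Tendsto (fun n => ∫ θ in (0:ℝ)..T, (g (θ + u n) - g θ) / u n) atTop
      (𝓝 (g T - g 0)) := by
    simp only [key]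
    exact (slope_tend (hΦd T)).sub (slope_tend (hΦd 0))
  exact tendsto_nhds_unique hlim1 hlim2

lemma lip_mul {f g : ℝ → ℝ} {Kf Kg Bf Bg : ℝ}
    (hf : ∀ a b, |f a - f b| ≤ Kf * |a - b|) (hg : ∀ a b, |g a - g b| ≤ Kg * |a - b|)
    (hBf : ∀ x, |f x| ≤ Bf) (hBg : ∀ x, |g x| ≤ Bg) :
    ∀ a b, |f a * g a - f b * g b| ≤ (Bf * Kg + Bg * Kf) * |a - b| := by
  intro a b
  have e : f a * g a - f b * g b = f a * (g a - g b) + g b * (f a - f b) := by ring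
  rw [e]
  calc |f a * (g a - g b) + g b * (f a - f b)|
      ≤ |f a * (g a - g b)| + |g b * (f a - f b)| := abs_add_le _ _
    _ = |f a| * |g a - g b| + |g b| * |f a - f b| := by rw [abs_mul, abs_mul]
    _ ≤ Bf * (Kg * |a - b|) + Bg * (Kf * |a - b|) := by
        refine add_le_add (mul_le_mul (hBf a) (hg a b) (abs_nonneg _)
          (le_trans (abs_nonneg _) (hBf a)))
          (mul_le_mul (hBg b) (hf a b) (abs_nonneg _) (le_trans (abs_nonneg _) (hBg b)))
    _ = (Bf * Kg + Bg * Kf) * |a - b| := by ring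

lemma log_le_two_sqrt {x : ℝ} (hx : 0 < x) : Real.log x ≤ 2 * Real.sqrt x := by
  have h1 : Real.log (Real.sqrt x) ≤ Real.sqrt x - 1 :=
    Real.log_le_sub_one_of_pos (Real.sqrt_pos.2 hx)
  have h2 : Real.log (Real.sqrt x) = Real.log x / 2 := Real.log_sqrt hx.le
  have h3 : 0 ≤ Real.sqrt x := Real.sqrt_nonneg x
  nlinarith

lemma abs_log_le {u : ℝ} (hu : 0 < u) : |Real.log u| ≤ 2 / Real.sqrt u + u := by
  have hsp : 0 < Real.sqrt u := Real.sqrt_pos.2 hu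
  rcases le_or_gt u 1 with h | h
  · have h0 : Real.log u ≤ 0 := Real.log_nonpos hu.le h
    rw [abs_of_nonpos h0]
    have : Real.log u⁻¹ ≤ 2 * Real.sqrt u⁻¹ := log_le_two_sqrt (by positivity)
    rw [Real.log_inv, Real.sqrt_inv] at this
    have h2 : 2 * (Real.sqrt u)⁻¹ = 2 / Real.sqrt u := by rw [div_eq_mul_inv]
    linarith
  · have h0 : 0 ≤ Real.log u := Real.log_nonneg h.le
    rw [abs_of_nonneg h0]
    have : Real.log u ≤ u - 1 := Real.log_le_sub_one_of_pos hu
    have : 0 < 2 / Real.sqrt u := by positivity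
    linarith

lemma two_div_sqrt_le {u δ : ℝ} (hu : 0 < u) (hδ : 0 < δ) :
    2 / Real.sqrt u ≤ 1 / (δ * u) + δ := by
  have hsp : 0 < Real.sqrt u := Real.sqrt_pos.2 hu
  have hsq : Real.sqrt u * Real.sqrt u = u := Real.mul_self_sqrt hu.le
  have h := mul_nonneg hsp.le (sq_nonneg (δ * Real.sqrt u - 1))
  rw [div_add' _ _ _ (by positivity : δ * u ≠ 0), div_le_div_iff₀ hsp (by positivity)]
  nlinarith [hsp, hδ, hsq]


set_option maxHeartbeats 2000000 in
theorem stmt11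
    (S : ℝ) (hS : 0 < S)
    (C Sg c s : ℝ → ℝ)
    (hC_lip : ∃ K : NNReal, LipschitzWith K C)
    (hSg_lip : ∃ K : NNReal, LipschitzWith K Sg)
    (hC_per : Function.Periodic C (2 * S))
    (hSg_per : Function.Periodic Sg (2 * S))
    (hc_meas : Measurable c) (hs_meas : Measurable s)
    (hc_bdd : ∃ B : ℝ, ∀ θ, |c θ| ≤ B) (hs_bdd : ∃ B : ℝ, ∀ θ, |s θ| ≤ B)
    (hconv : ∀ᵐ θ ∂(volume : Measure ℝ), HasDerivAt C (-(s θ)) θ ∧ HasDerivAt Sg (c θ) θ ∧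
      c θ * C θ + s θ * Sg θ = 1)
    (M : ℝ) (hM : IsGreatest (C '' Set.Icc 0 (2 * S)) M)
    (L F : ℝ → ℝ)
    (hL : ∀ l : ℝ, M < l → L l = ∫ θ in (0:ℝ)..(2*S), 1 / (l - C θ))
    (hF : ∀ l : ℝ, M < l → F l = ∫ θ in (0:ℝ)..(2*S), c θ / (l - C θ))
    (hM0 : 0 < M) :
    ∀ A : ℝ, 0 < A → ∃! l : ℝ, l ∈ Set.Ioi M ∧ F l = A := by
  intro A hA
  obtain ⟨KC₀, hKC⟩ := hC_lip
  obtain ⟨KS₀, hKS⟩ := hSg_lip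
  obtain ⟨Bc, hBc⟩ := hc_bdd
  obtain ⟨Bs, hBs⟩ := hs_bdd
  have hT : (0:ℝ) < 2 * S := by positivity
  have hCcont : Continuous C := hKC.continuous
  have hSgcont : Continuous Sg := hKS.continuous
  have hBc0 : 0 ≤ Bc := le_trans (abs_nonneg _) (hBc 0)
  have hBs0 : 0 ≤ Bs := le_trans (abs_nonneg _) (hBs 0)
  -- C is bounded above by M everywhere
  have hCleM : ∀ θ, C θ ≤ M := by
    intro θ
    obtain ⟨y, hy, hyx⟩ := hC_per.exists_mem_Ico₀ hT θ
    rw [hyx]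
    exact hM.2 ⟨y, ⟨hy.1, hy.2.le⟩, rfl⟩
  -- minimum of C
  obtain ⟨θm, hθmmem, hθm⟩ := isCompact_Icc.exists_isMinOn ⟨0, left_mem_Icc.2 hT.le⟩
    (hCcont.continuousOn (s := Set.Icc (0:ℝ) (2*S)))
  set m := C θm with hm_def
  have hmle : ∀ θ, m ≤ C θ := by
    intro θ
    obtain ⟨y, hy, hyx⟩ := hC_per.exists_mem_Ico₀ hT θ
    rw [hyx]
    exact hθm ⟨hy.1, hy.2.le⟩
  have hmM : m ≤ M := hCleM θm
  -- bound for Sg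
  obtain ⟨BS, hBS0, hBS⟩ : ∃ B, 0 ≤ B ∧ ∀ θ, |Sg θ| ≤ B := by
    obtain ⟨θs, _, hθs⟩ := isCompact_Icc.exists_isMaxOn ⟨0, left_mem_Icc.2 hT.le⟩
      ((hSgcont.abs).continuousOn (s := Set.Icc (0:ℝ) (2*S)))
    refine ⟨|Sg θs|, abs_nonneg _, fun θ => ?_⟩
    obtain ⟨y, hy, hyx⟩ := hSg_per.exists_mem_Ico₀ hT θ
    rw [hyx]
    exact hθs ⟨hy.1, hy.2.le⟩
  -- positivity of denominators
  have hupos : ∀ l : ℝ, M < l → ∀ θ, 0 < l - C θ := fun l hl θ => by linarith [hCleM θ]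
  -- generic integrability
  have hInt : ∀ (w : ℝ → ℝ) (B : ℝ), Measurable w → (∀ θ, |w θ| ≤ B) →
      ∀ a b : ℝ, IntervalIntegrable w volume a b := fun w B hw hB a b =>
    intInt_of_bdd hw.aestronglyMeasurable hB
  have hlMpos : ∀ l : ℝ, M < l → 0 < l - M := fun l hl => sub_pos.2 hl
  -- Lipschitz estimates as plain inequalities
  have hCK : ∀ a b : ℝ, |C a - C b| ≤ (KC₀ : ℝ) * |a - b| := by
    intro a b
    have := hKC.dist_le_mul a b
    rwa [Real.dist_eq, Real.dist_eq] at this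
  have hSK : ∀ a b : ℝ, |Sg a - Sg b| ≤ (KS₀ : ℝ) * |a - b| := by
    intro a b
    have := hKS.dist_le_mul a b
    rwa [Real.dist_eq, Real.dist_eq] at this
  -- bounds on integrands
  have hbd1 : ∀ l : ℝ, M < l → ∀ (w : ℝ → ℝ) (B : ℝ), (∀ θ, |w θ| ≤ B) →
      ∀ θ, |w θ / (l - C θ)| ≤ B / (l - M) := by
    intro l hl w B hB θ
    rw [abs_div, abs_of_pos (hupos l hl θ)]
    exact div_le_div₀ (le_trans (abs_nonneg _) (hB θ)) (hB θ) (hlMpos l hl)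
      (by linarith [hCleM θ])
  have hbd2 : ∀ l : ℝ, M < l → ∀ (w : ℝ → ℝ) (B : ℝ), (∀ θ, |w θ| ≤ B) →
      ∀ θ, |w θ / (l - C θ)^2| ≤ B / (l - M)^2 := by
    intro l hl w B hB θ
    rw [abs_div, abs_of_pos (pow_pos (hupos l hl θ) 2)]
    exact div_le_div₀ (le_trans (abs_nonneg _) (hB θ)) (hB θ)
      (pow_pos (hlMpos l hl) 2)
      (pow_le_pow_left₀ (hlMpos l hl).le (by linarith [hCleM θ]) 2)
  have hssg : ∀ θ, |s θ * Sg θ| ≤ Bs * BS := by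
    intro θ
    rw [abs_mul]
    exact mul_le_mul (hBs θ) (hBS θ) (abs_nonneg _) hBs0
  have hmu : Measurable (fun l : ℝ => C l) := hCcont.measurable
  -- integrability of all integrands used
  have hint_cu : ∀ l : ℝ, M < l →
      IntervalIntegrable (fun θ => c θ / (l - C θ)) volume 0 (2*S) := fun l hl =>
    hInt _ (Bc / (l - M)) (hc_meas.div (measurable_const.sub hmu)) (hbd1 l hl c Bc hBc) 0 (2*S)
  have hint_1u : ∀ l : ℝ, M < l →
      IntervalIntegrable (fun θ => 1 / (l - C θ)) volume 0 (2*S) := fun l hl =>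
    hInt _ (1 / (l - M)) (measurable_const.div (measurable_const.sub hmu))
      (hbd1 l hl (fun _ => 1) 1 (fun _ => by norm_num)) 0 (2*S)
  have hint_ssgu : ∀ l : ℝ, M < l →
      IntervalIntegrable (fun θ => s θ * Sg θ / (l - C θ)) volume 0 (2*S) := fun l hl =>
    hInt _ (Bs * BS / (l - M)) ((hs_meas.mul hSgcont.measurable).div (measurable_const.sub hmu))
      (hbd1 l hl _ _ hssg) 0 (2*S)
  have hint_cu2 : ∀ l : ℝ, M < l →
      IntervalIntegrable (fun θ => c θ / (l - C θ)^2) volume 0 (2*S) := fun l hl =>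
    hInt _ (Bc / (l - M)^2) (hc_meas.div ((measurable_const.sub hmu).pow_const 2))
      (hbd2 l hl c Bc hBc) 0 (2*S)
  have hint_1u2 : ∀ l : ℝ, M < l →
      IntervalIntegrable (fun θ => 1 / (l - C θ)^2) volume 0 (2*S) := fun l hl =>
    hInt _ (1 / (l - M)^2) (measurable_const.div ((measurable_const.sub hmu).pow_const 2))
      (hbd2 l hl (fun _ => 1) 1 (fun _ => by norm_num)) 0 (2*S)
  have hint_ssgu2 : ∀ l : ℝ, M < l →
      IntervalIntegrable (fun θ => s θ * Sg θ / (l - C θ)^2) volume 0 (2*S) := fun l hl =>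
    hInt _ (Bs * BS / (l - M)^2)
      ((hs_meas.mul hSgcont.measurable).div ((measurable_const.sub hmu).pow_const 2))
      (hbd2 l hl _ _ hssg) 0 (2*S)
  have hlogbd : ∀ l : ℝ, M < l → ∀ θ,
      |Real.log (l - C θ)| ≤ |Real.log (l - M)| + |Real.log (l - m)| := by
    intro l hl θ
    have h1 : Real.log (l - M) ≤ Real.log (l - C θ) :=
      Real.log_le_log (hlMpos l hl) (by linarith [hCleM θ])
    have h2 : Real.log (l - C θ) ≤ Real.log (l - m) :=
      Real.log_le_log (hupos l hl θ) (by linarith [hmle θ])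
    refine le_trans (abs_le_max_abs_abs h1 h2) (max_le ?_ ?_)
    · linarith [abs_nonneg (Real.log (l - m))]
    · linarith [abs_nonneg (Real.log (l - M))]
  have hint_clog : ∀ l : ℝ, M < l →
      IntervalIntegrable (fun θ => c θ * Real.log (l - C θ)) volume 0 (2*S) := by
    intro l hl
    refine hInt _ (Bc * (|Real.log (l - M)| + |Real.log (l - m)|))
      (hc_meas.mul (Real.measurable_log.comp (measurable_const.sub hmu))) (fun θ => ?_) 0 (2*S)
    show |c θ * Real.log (l - C θ)| ≤ _
    rw [abs_mul]
    exact mul_le_mul (hBc θ) (hlogbd l hl θ) (abs_nonneg _) hBc0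
  -- ∫ c = 0
  have key1 : (∫ θ in (0:ℝ)..(2*S), c θ) = 0 := by
    have := ftc_lip (T := 2*S) hKS (hconv.mono fun θ h => h.2.1)
    rw [this]
    have := hSg_per 0
    simp only [zero_add] at this
    rw [this, sub_self]
  -- ∫ sΣ/u² = ∫ c/u
  have key2 : ∀ l : ℝ, M < l →
      (∫ θ in (0:ℝ)..(2*S), s θ * Sg θ / (l - C θ)^2) = ∫ θ in (0:ℝ)..(2*S), c θ / (l - C θ) := by
    intro l hl
    have hlM := hlMpos l hl
    have hune : ∀ θ, l - C θ ≠ 0 := fun θ => (hupos l hl θ).ne'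
    -- Lipschitz bound for θ ↦ (l - C θ)⁻¹
    have hinv_lip : ∀ a b : ℝ, |(l - C a)⁻¹ - (l - C b)⁻¹| ≤ ((KC₀:ℝ)/(l-M)^2) * |a - b| := by
      intro a b
      rw [inv_sub_inv (hune a) (hune b), abs_div]
      have h1 : |l - C b - (l - C a)| ≤ (KC₀:ℝ) * |a - b| := by
        rw [show l - C b - (l - C a) = C a - C b by ring]
        exact hCK a b
      have h2 : (l-M)^2 ≤ |(l - C a) * (l - C b)| := by
        rw [abs_mul, abs_of_pos (hupos l hl a), abs_of_pos (hupos l hl b)]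
        nlinarith [hCleM a, hCleM b, hlM]
      calc |l - C b - (l - C a)| / |(l - C a) * (l - C b)|
          ≤ ((KC₀:ℝ) * |a - b|) / (l-M)^2 :=
            div_le_div₀ (by positivity) h1 (by positivity) h2
        _ = ((KC₀:ℝ)/(l-M)^2) * |a - b| := by ring
    have hinv_bd : ∀ θ, |(l - C θ)⁻¹| ≤ (l - M)⁻¹ := by
      intro θ
      rw [abs_of_pos (inv_pos.2 (hupos l hl θ))]
      exact inv_anti₀ hlM (by linarith [hCleM θ])
    have glip : LipschitzWith (Real.toNNReal (BS * ((KC₀:ℝ)/(l-M)^2) + (l-M)⁻¹ * (KS₀:ℝ)))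
        (fun θ => Sg θ * (l - C θ)⁻¹) :=
      lipOfAbs (lip_mul hSK hinv_lip hBS hinv_bd)
    have gderiv : ∀ᵐ θ ∂(volume : Measure ℝ), HasDerivAt (fun θ => Sg θ * (l - C θ)⁻¹)
        (c θ * (l - C θ)⁻¹ + Sg θ * (-(s θ)/(l - C θ)^2)) θ := by
      refine hconv.mono fun θ h => ?_
      obtain ⟨hC', hSg', _⟩ := h
      have hu' : HasDerivAt (fun θ => l - C θ) (s θ) θ := by
        simpa using hC'.const_sub l
      exact hSg'.mul (hu'.inv (hune θ))
    have h0 := ftc_lip (T := 2*S) glip gderiv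
    have hper : Sg (2*S) * (l - C (2*S))⁻¹ - Sg 0 * (l - C 0)⁻¹ = 0 := by
      have h1 := hSg_per 0
      have h2 := hC_per 0
      simp only [zero_add] at h1 h2
      rw [h1, h2, sub_self]
    rw [hper] at h0
    have e : ∀ θ : ℝ, c θ * (l - C θ)⁻¹ + Sg θ * (-(s θ)/(l - C θ)^2)
        = c θ / (l - C θ) - s θ * Sg θ / (l - C θ)^2 := by
      intro θ
      field_simp
      ring
    rw [intervalIntegral.integral_congr (g := fun θ => c θ / (l - C θ) - s θ * Sg θ / (l - C θ)^2)
      (fun θ _ => e θ)] at h0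
    rw [intervalIntegral.integral_sub (hint_cu l hl) (hint_ssgu2 l hl)] at h0
    linarith
  -- ∫ c log u = - ∫ sΣ/u
  have key3 : ∀ l : ℝ, M < l →
      (∫ θ in (0:ℝ)..(2*S), c θ * Real.log (l - C θ))
        = -∫ θ in (0:ℝ)..(2*S), s θ * Sg θ / (l - C θ) := by
    intro l hl
    have hlM := hlMpos l hl
    have hune : ∀ θ, l - C θ ≠ 0 := fun θ => (hupos l hl θ).ne'
    have hub : ∀ x, l - M ≤ l - C x := fun x => by linarith [hCleM x]
    have hlog1 : ∀ x y : ℝ, l - M ≤ x → l - M ≤ y →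
        Real.log x - Real.log y ≤ |x - y| / (l - M) := by
      intro x y hx hy
      have hx0 : 0 < x := lt_of_lt_of_le hlM hx
      have hy0 : 0 < y := lt_of_lt_of_le hlM hy
      have h1 : Real.log (x/y) ≤ x/y - 1 := Real.log_le_sub_one_of_pos (div_pos hx0 hy0)
      rw [Real.log_div hx0.ne' hy0.ne'] at h1
      have h2 : x/y - 1 = (x - y)/y := by field_simp
      have h3 : (x - y)/y ≤ |x - y|/(l - M) :=
        div_le_div₀ (abs_nonneg _) (le_abs_self _) hlM hy
      linarith
    have hloglip : ∀ a b : ℝ, |Real.log (l - C a) - Real.log (l - C b)|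
        ≤ ((KC₀:ℝ)/(l - M)) * |a - b| := by
      intro a b
      have habs : ∀ x y : ℝ, |l - C x - (l - C y)| ≤ (KC₀:ℝ) * |x - y| := by
        intro x y
        rw [show l - C x - (l - C y) = -(C x - C y) by ring, abs_neg]
        exact hCK x y
      have step : ∀ x y : ℝ, Real.log (l - C x) - Real.log (l - C y)
          ≤ ((KC₀:ℝ)/(l - M)) * |x - y| := by
        intro x y
        calc Real.log (l - C x) - Real.log (l - C y)
            ≤ |l - C x - (l - C y)| / (l - M) := hlog1 _ _ (hub x) (hub y)
          _ ≤ ((KC₀:ℝ) * |x - y|) / (l - M) :=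
              div_le_div₀ (by positivity) (habs x y) hlM le_rfl
          _ = ((KC₀:ℝ)/(l - M)) * |x - y| := by ring
      rw [abs_sub_le_iff]
      exact ⟨step a b, by rw [abs_sub_comm]; exact step b a⟩
    have hlogbd' : ∀ θ, |Real.log (l - C θ)| ≤ |Real.log (l - M)| + |Real.log (l - m)| :=
      hlogbd l hl
    have glip : LipschitzWith (Real.toNNReal
        (BS * ((KC₀:ℝ)/(l - M)) + (|Real.log (l - M)| + |Real.log (l - m)|) * (KS₀:ℝ)))
        (fun θ => Sg θ * Real.log (l - C θ)) :=
      lipOfAbs (lip_mul hSK hloglip hBS hlogbd')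
    have gderiv : ∀ᵐ θ ∂(volume : Measure ℝ), HasDerivAt (fun θ => Sg θ * Real.log (l - C θ))
        (c θ * Real.log (l - C θ) + Sg θ * (s θ / (l - C θ))) θ := by
      refine hconv.mono fun θ h => ?_
      obtain ⟨hC', hSg', _⟩ := h
      have hu' : HasDerivAt (fun θ => l - C θ) (s θ) θ := by
        simpa using hC'.const_sub l
      exact hSg'.mul (hu'.log (hune θ))
    have h0 := ftc_lip (T := 2*S) glip gderiv
    have hper : Sg (2*S) * Real.log (l - C (2*S)) - Sg 0 * Real.log (l - C 0) = 0 := by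
      have h1 := hSg_per 0
      have h2 := hC_per 0
      simp only [zero_add] at h1 h2
      rw [h1, h2, sub_self]
    rw [hper] at h0
    have e : ∀ θ : ℝ, c θ * Real.log (l - C θ) + Sg θ * (s θ / (l - C θ))
        = c θ * Real.log (l - C θ) + s θ * Sg θ / (l - C θ) := by
      intro θ
      ring
    rw [intervalIntegral.integral_congr
      (g := fun θ => c θ * Real.log (l - C θ) + s θ * Sg θ / (l - C θ)) (fun θ _ => e θ)] at h0
    rw [intervalIntegral.integral_add (hint_clog l hl) (hint_ssgu l hl)] at h0
    linarith
  -- identity for F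
  have idF : ∀ l : ℝ, M < l →
      l * F l = L l + ∫ θ in (0:ℝ)..(2*S), c θ * Real.log (l - C θ) := by
    intro l hl
    have hune : ∀ θ, l - C θ ≠ 0 := fun θ => (hupos l hl θ).ne'
    have e : ∀ᵐ θ ∂(volume : Measure ℝ), θ ∈ Set.uIoc (0:ℝ) (2*S) →
        l * (c θ / (l - C θ)) = c θ + (1 / (l - C θ) - s θ * Sg θ / (l - C θ)) := by
      refine hconv.mono fun θ h _ => ?_
      obtain ⟨_, _, hid⟩ := h
      have hu := hune θ
      have h1 : s θ * Sg θ = 1 - c θ * C θ := by linarith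
      rw [h1]
      field_simp
      ring
    calc l * F l = ∫ θ in (0:ℝ)..(2*S), l * (c θ / (l - C θ)) := by
          rw [hF l hl, intervalIntegral.integral_const_mul]
      _ = ∫ θ in (0:ℝ)..(2*S), (c θ + (1 / (l - C θ) - s θ * Sg θ / (l - C θ))) :=
          intervalIntegral.integral_congr_ae e
      _ = (∫ θ in (0:ℝ)..(2*S), c θ)
            + ∫ θ in (0:ℝ)..(2*S), (1 / (l - C θ) - s θ * Sg θ / (l - C θ)) :=
          intervalIntegral.integral_add (hInt c Bc hc_meas hBc 0 (2*S))
            ((hint_1u l hl).sub (hint_ssgu l hl))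
      _ = (∫ θ in (0:ℝ)..(2*S), 1 / (l - C θ)) - ∫ θ in (0:ℝ)..(2*S), s θ * Sg θ / (l - C θ) := by
          rw [key1, intervalIntegral.integral_sub (hint_1u l hl) (hint_ssgu l hl), zero_add]
      _ = L l + ∫ θ in (0:ℝ)..(2*S), c θ * Real.log (l - C θ) := by
          rw [hL l hl, key3 l hl]; ring
  -- identity for the derivative integrand
  have idG : ∀ l : ℝ, M < l →
      l * (∫ θ in (0:ℝ)..(2*S), c θ / (l - C θ)^2)
        = ∫ θ in (0:ℝ)..(2*S), 1 / (l - C θ)^2 := by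
    intro l hl
    have hune : ∀ θ, l - C θ ≠ 0 := fun θ => (hupos l hl θ).ne'
    have e : ∀ᵐ θ ∂(volume : Measure ℝ), θ ∈ Set.uIoc (0:ℝ) (2*S) →
        l * (c θ / (l - C θ)^2)
          = c θ / (l - C θ) + (1 / (l - C θ)^2 - s θ * Sg θ / (l - C θ)^2) := by
      refine hconv.mono fun θ h _ => ?_
      obtain ⟨_, _, hid⟩ := h
      have hu := hune θ
      have h1 : s θ * Sg θ = 1 - c θ * C θ := by linarith
      rw [h1]
      field_simp
      ring
    calc l * (∫ θ in (0:ℝ)..(2*S), c θ / (l - C θ)^2)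
        = ∫ θ in (0:ℝ)..(2*S), l * (c θ / (l - C θ)^2) := by
          rw [intervalIntegral.integral_const_mul]
      _ = ∫ θ in (0:ℝ)..(2*S),
            (c θ / (l - C θ) + (1 / (l - C θ)^2 - s θ * Sg θ / (l - C θ)^2)) :=
          intervalIntegral.integral_congr_ae e
      _ = (∫ θ in (0:ℝ)..(2*S), c θ / (l - C θ))
            + ((∫ θ in (0:ℝ)..(2*S), 1 / (l - C θ)^2)
              - ∫ θ in (0:ℝ)..(2*S), s θ * Sg θ / (l - C θ)^2) := by
          rw [intervalIntegral.integral_add (hint_cu l hl)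
            ((hint_1u2 l hl).sub (hint_ssgu2 l hl)),
            intervalIntegral.integral_sub (hint_1u2 l hl) (hint_ssgu2 l hl)]
      _ = ∫ θ in (0:ℝ)..(2*S), 1 / (l - C θ)^2 := by
          rw [key2 l hl]; ring
  -- derivative of F
  have hFd : ∀ l : ℝ, M < l →
      HasDerivAt F (-(∫ θ in (0:ℝ)..(2*S), c θ / (l - C θ)^2)) l := by
    intro l hl
    set ε := (l - M)/2 with hε_def
    have hε0 : 0 < ε := by simp only [hε_def]; linarith
    have hball : ∀ x ∈ Metric.ball l ε, ∀ θ : ℝ, ε ≤ x - C θ := by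
      intro x hx θ
      rw [Metric.mem_ball, Real.dist_eq] at hx
      have := abs_lt.1 hx
      have := hCleM θ
      simp only [hε_def] at *
      linarith
    have key := intervalIntegral.hasDerivAt_integral_of_dominated_loc_of_deriv_le
      (F := fun x θ => c θ / (x - C θ)) (F' := fun x θ => -(c θ / (x - C θ)^2))
      (x₀ := l) (a := (0:ℝ)) (b := 2*S) (bound := fun _ => Bc / ε^2) (μ := volume) (Metric.ball_mem_nhds l hε0)
      (Eventually.of_forall fun x =>
        ((hc_meas.div (measurable_const.sub hCcont.measurable)).aestronglyMeasurable).restrict)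
      (hint_cu l hl)
      (((hc_meas.div ((measurable_const.sub hCcont.measurable).pow_const 2)).neg).aestronglyMeasurable.restrict)
      (ae_of_all _ fun θ _ x hx => ?_) intervalIntegrable_const
      (ae_of_all _ fun θ _ x hx => ?_)
    · have heq : F =ᶠ[nhds l] fun x => ∫ θ in (0:ℝ)..(2*S), c θ / (x - C θ) := by
        filter_upwards [isOpen_Ioi.mem_nhds (show l ∈ Set.Ioi M from hl)] with x hx
        exact hF x hx
      have h2 := key.2
      rw [intervalIntegral.integral_neg] at h2
      exact h2.congr_of_eventuallyEq heq
    · -- bound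
      have h1 := hball x hx θ
      rw [norm_neg, Real.norm_eq_abs, abs_div, abs_of_pos (pow_pos (lt_of_lt_of_le hε0 h1) 2)]
      exact div_le_div₀ hBc0 (hBc θ) (pow_pos hε0 2) (pow_le_pow_left₀ hε0.le h1 2)
    · -- derivative in x
      have h1 := hball x hx θ
      have hne : x - C θ ≠ 0 := (lt_of_lt_of_le hε0 h1).ne'
      have h2 : HasDerivAt (fun x : ℝ => x - C θ) 1 x := (hasDerivAt_id x).sub_const _
      have h3 := (h2.inv hne).const_mul (c θ)
      have h4 : c θ * (-1 / (x - C θ)^2) = -(c θ / (x - C θ)^2) := by ring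
      rw [h4] at h3
      refine h3.congr_of_eventuallyEq (Eventually.of_forall fun y => ?_)
      simp [div_eq_mul_inv]
  -- positivity of ∫ 1/u²
  have hL2pos : ∀ l : ℝ, M < l → 0 < ∫ θ in (0:ℝ)..(2*S), 1 / (l - C θ)^2 := by
    intro l hl
    have hlm : 0 < l - m := by linarith [hmM]
    have hmono : ∀ θ ∈ Set.Icc (0:ℝ) (2*S), 1 / (l - m)^2 ≤ 1 / (l - C θ)^2 := by
      intro θ _
      apply one_div_le_one_div_of_le (pow_pos (hupos l hl θ) 2)
      exact pow_le_pow_left₀ (hupos l hl θ).le (by linarith [hmle θ]) 2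
    have h1 := intervalIntegral.integral_mono_on hT.le intervalIntegrable_const
      (hint_1u2 l hl) hmono
    rw [intervalIntegral.integral_const, smul_eq_mul, sub_zero] at h1
    have h2 : 0 < 2 * S * (1 / (l - m)^2) := by positivity
    linarith
  -- F is strictly decreasing on (M, ∞)
  have hanti : StrictAntiOn F (Set.Ioi M) := by
    apply strictAntiOn_of_deriv_neg (convex_Ioi M)
    · exact fun x hx => ((hFd x hx).continuousAt).continuousWithinAt
    · intro x hx
      rw [interior_Ioi] at hx
      rw [(hFd x hx).deriv]
      have h1 := hL2pos x hx
      have h2 := idG x hx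
      have hx0 : 0 < x := lt_trans hM0 hx
      have : 0 < ∫ θ in (0:ℝ)..(2*S), c θ / (x - C θ)^2 := by
        by_contra h
        push_neg at h
        nlinarith
      linarith
  -- L is big near M
  have hLbig : ∀ A₂ : ℝ, ∃ l : ℝ, l ∈ Set.Ioo M (M+1) ∧ A₂ ≤ L l := by
    intro A₂
    set K : ℝ := (KC₀ : ℝ) + 1 with hK_def
    have hK0 : 0 < K := by positivity
    have hCK' : ∀ a b : ℝ, |C a - C b| ≤ K * |a - b| := fun a b =>
      (hCK a b).trans (mul_le_mul_of_nonneg_right (by simp [hK_def]) (abs_nonneg _))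
    obtain ⟨θ₀, hθ₀mem, hCθ₀⟩ := hM.1
    set ε : ℝ := min (K * S * Real.exp (-(K * A₂))) (1/2) with hε_def
    have hε0 : 0 < ε := lt_min (by positivity) one_half_pos
    have hε1 : ε ≤ 1/2 := min_le_right _ _
    have hεe : ε ≤ K * S * Real.exp (-(K * A₂)) := min_le_left _ _
    set l : ℝ := M + ε with hl_def
    have hl : M < l := by simp only [hl_def]; linarith
    refine ⟨l, ⟨hl, by simp only [hl_def]; linarith⟩, ?_⟩
    rw [hL l hl]
    -- continuity of the integrand
    have hcont1 : Continuous (fun θ => 1 / (l - C θ)) :=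
      continuous_const.div (continuous_const.sub hCcont) (fun θ => (hupos l hl θ).ne')
    have hnn : ∀ (a b : ℝ), (0:ℝ) ≤ ∫ θ in a..b, 1 / (l - C θ) ∨ True := fun _ _ => Or.inr trivial
    -- the two cases
    have main : ∀ a : ℝ, 0 ≤ a → a + S ≤ 2*S →
        (∀ θ ∈ Set.Icc a (a+S), l - C θ ≤ ε + K * (θ - a)) →
        A₂ ≤ ∫ θ in (0:ℝ)..(2*S), 1 / (l - C θ) := by
      intro a ha hb hptw
      have hIa : IntervalIntegrable (fun θ => 1 / (l - C θ)) volume 0 a :=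
        hcont1.intervalIntegrable _ _
      have hIab : IntervalIntegrable (fun θ => 1 / (l - C θ)) volume a (a+S) :=
        hcont1.intervalIntegrable _ _
      have hIb : IntervalIntegrable (fun θ => 1 / (l - C θ)) volume (a+S) (2*S) :=
        hcont1.intervalIntegrable _ _
      have hsplit : (∫ θ in (0:ℝ)..(2*S), 1 / (l - C θ))
          = (∫ θ in (0:ℝ)..a, 1 / (l - C θ)) + ((∫ θ in a..(a+S), 1 / (l - C θ))
            + ∫ θ in (a+S)..(2*S), 1 / (l - C θ)) := by
        rw [intervalIntegral.integral_add_adjacent_intervals hIab hIb,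
          intervalIntegral.integral_add_adjacent_intervals hIa (hIab.trans hIb)]
      have hnn1 : 0 ≤ ∫ θ in (0:ℝ)..a, 1 / (l - C θ) :=
        intervalIntegral.integral_nonneg ha (fun θ _ => (div_pos one_pos (hupos l hl θ)).le)
      have hnn2 : 0 ≤ ∫ θ in (a+S)..(2*S), 1 / (l - C θ) :=
        intervalIntegral.integral_nonneg hb (fun θ _ => (div_pos one_pos (hupos l hl θ)).le)
      -- comparison on [a, a+S]
      have hposεK : ∀ θ ∈ Set.uIcc a (a+S), 0 < ε + K * (θ - a) := by
        intro θ hθ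
        rw [Set.uIcc_of_le (by linarith : a ≤ a + S)] at hθ
        have := hθ.1
        nlinarith
      have hcomp : (∫ θ in a..(a+S), 1 / (ε + K * (θ - a)))
          ≤ ∫ θ in a..(a+S), 1 / (l - C θ) := by
        apply intervalIntegral.integral_mono_on (by linarith : a ≤ a + S)
        · exact (ContinuousOn.div continuousOn_const
            ((continuous_const.add (continuous_const.mul (continuous_id.sub continuous_const))).continuousOn)
            (fun θ hθ => (hposεK θ hθ).ne')).intervalIntegrable
        · exact hIab
        · intro θ hθ
          apply one_div_le_one_div_of_le (hupos l hl θ)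
          exact hptw θ hθ
      -- explicit integral
      have hval : (∫ θ in a..(a+S), 1 / (ε + K * (θ - a)))
          = K⁻¹ * Real.log (ε + K * S) - K⁻¹ * Real.log ε := by
        have hder : ∀ θ ∈ Set.uIcc a (a+S),
            HasDerivAt (fun θ => K⁻¹ * Real.log (ε + K * (θ - a))) (1 / (ε + K * (θ - a))) θ := by
          intro θ hθ
          have hpos := hposεK θ hθ
          have hinn : HasDerivAt (fun θ : ℝ => ε + K * (θ - a)) K θ := by
            simpa using (((hasDerivAt_id θ).sub_const a).const_mul K).const_add ε
          have h2 := (hinn.log hpos.ne').const_mul K⁻¹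
          have h3 : K⁻¹ * (K / (ε + K * (θ - a))) = 1 / (ε + K * (θ - a)) := by
            field_simp
          rwa [h3] at h2
        have hintc : IntervalIntegrable (fun θ => 1 / (ε + K * (θ - a))) volume a (a+S) :=
          (ContinuousOn.div continuousOn_const
            ((continuous_const.add (continuous_const.mul (continuous_id.sub continuous_const))).continuousOn)
            (fun θ hθ => (hposεK θ hθ).ne')).intervalIntegrable
        rw [intervalIntegral.integral_eq_sub_of_hasDerivAt hder hintc]
        show K⁻¹ * Real.log (ε + K * (a + S - a)) - K⁻¹ * Real.log (ε + K * (a - a)) = _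
        rw [show a + S - a = S by ring, show a - a = 0 by ring]
        norm_num
      -- value is at least A₂
      have hlogε : Real.log ε ≤ Real.log (K * S) - K * A₂ := by
        have h1 : Real.log ε ≤ Real.log (K * S * Real.exp (-(K * A₂))) :=
          Real.log_le_log hε0 hεe
        rwa [Real.log_mul (by positivity) (Real.exp_ne_zero _), Real.log_exp] at h1
      have hlogKS : Real.log (K * S) ≤ Real.log (ε + K * S) :=
        Real.log_le_log (by positivity) (by linarith)
      have hA2 : A₂ ≤ K⁻¹ * Real.log (ε + K * S) - K⁻¹ * Real.log ε := by
        have h1 : K * A₂ ≤ Real.log (ε + K * S) - Real.log ε := by linarith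
        have h2 := mul_le_mul_of_nonneg_left h1 (inv_pos.2 hK0).le
        have h3 : K⁻¹ * (K * A₂) = A₂ := by field_simp
        rw [h3] at h2
        linarith [h2]
      rw [hsplit]
      linarith
    have main2 : ∀ b : ℝ, S ≤ b → b ≤ 2*S →
        (∀ θ ∈ Set.Icc (b-S) b, l - C θ ≤ ε + K * (b - θ)) →
        A₂ ≤ ∫ θ in (0:ℝ)..(2*S), 1 / (l - C θ) := by
      intro b hbS hb2 hptw
      have hIa : IntervalIntegrable (fun θ => 1 / (l - C θ)) volume 0 (b-S) :=
        hcont1.intervalIntegrable _ _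
      have hIab : IntervalIntegrable (fun θ => 1 / (l - C θ)) volume (b-S) b :=
        hcont1.intervalIntegrable _ _
      have hIb : IntervalIntegrable (fun θ => 1 / (l - C θ)) volume b (2*S) :=
        hcont1.intervalIntegrable _ _
      have hsplit : (∫ θ in (0:ℝ)..(2*S), 1 / (l - C θ))
          = (∫ θ in (0:ℝ)..(b-S), 1 / (l - C θ)) + ((∫ θ in (b-S)..b, 1 / (l - C θ))
            + ∫ θ in b..(2*S), 1 / (l - C θ)) := by
        rw [intervalIntegral.integral_add_adjacent_intervals hIab hIb,
          intervalIntegral.integral_add_adjacent_intervals hIa (hIab.trans hIb)]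
      have hnn1 : 0 ≤ ∫ θ in (0:ℝ)..(b-S), 1 / (l - C θ) :=
        intervalIntegral.integral_nonneg (by linarith) (fun θ _ => (div_pos one_pos (hupos l hl θ)).le)
      have hnn2 : 0 ≤ ∫ θ in b..(2*S), 1 / (l - C θ) :=
        intervalIntegral.integral_nonneg (by linarith) (fun θ _ => (div_pos one_pos (hupos l hl θ)).le)
      have hposεK : ∀ θ ∈ Set.uIcc (b-S) b, 0 < ε + K * (b - θ) := by
        intro θ hθ
        rw [Set.uIcc_of_le (by linarith : b - S ≤ b)] at hθ
        have := hθ.2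
        nlinarith
      have hcomp : (∫ θ in (b-S)..b, 1 / (ε + K * (b - θ)))
          ≤ ∫ θ in (b-S)..b, 1 / (l - C θ) := by
        apply intervalIntegral.integral_mono_on (by linarith : b - S ≤ b)
        · exact (ContinuousOn.div continuousOn_const
            ((continuous_const.add (continuous_const.mul (continuous_const.sub continuous_id))).continuousOn)
            (fun θ hθ => (hposεK θ hθ).ne')).intervalIntegrable
        · exact hIab
        · intro θ hθ
          apply one_div_le_one_div_of_le (hupos l hl θ)
          exact hptw θ hθ
      have hval : (∫ θ in (b-S)..b, 1 / (ε + K * (b - θ)))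
          = K⁻¹ * Real.log (ε + K * S) - K⁻¹ * Real.log ε := by
        have hder : ∀ θ ∈ Set.uIcc (b-S) b,
            HasDerivAt (fun θ => -(K⁻¹ * Real.log (ε + K * (b - θ)))) (1 / (ε + K * (b - θ))) θ := by
          intro θ hθ
          have hpos := hposεK θ hθ
          have hinn : HasDerivAt (fun θ : ℝ => ε + K * (b - θ)) (-K) θ := by
            have := (((hasDerivAt_id θ).const_sub b).const_mul K).const_add ε
            simpa using this
          have h2 := ((hinn.log hpos.ne').const_mul K⁻¹).neg
          have h3 : -(K⁻¹ * (-K / (ε + K * (b - θ)))) = 1 / (ε + K * (b - θ)) := by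
            field_simp
          rwa [h3] at h2
        have hintc : IntervalIntegrable (fun θ => 1 / (ε + K * (b - θ))) volume (b-S) b :=
          (ContinuousOn.div continuousOn_const
            ((continuous_const.add (continuous_const.mul (continuous_const.sub continuous_id))).continuousOn)
            (fun θ hθ => (hposεK θ hθ).ne')).intervalIntegrable
        rw [intervalIntegral.integral_eq_sub_of_hasDerivAt hder hintc]
        show -(K⁻¹ * Real.log (ε + K * (b - b))) - -(K⁻¹ * Real.log (ε + K * (b - (b - S)))) = _
        rw [show b - b = 0 by ring, show b - (b - S) = S by ring]
        norm_num
        ring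
      have hlogε : Real.log ε ≤ Real.log (K * S) - K * A₂ := by
        have h1 : Real.log ε ≤ Real.log (K * S * Real.exp (-(K * A₂))) :=
          Real.log_le_log hε0 hεe
        rwa [Real.log_mul (by positivity) (Real.exp_ne_zero _), Real.log_exp] at h1
      have hlogKS : Real.log (K * S) ≤ Real.log (ε + K * S) :=
        Real.log_le_log (by positivity) (by linarith)
      have hA2 : A₂ ≤ K⁻¹ * Real.log (ε + K * S) - K⁻¹ * Real.log ε := by
        have h1 : K * A₂ ≤ Real.log (ε + K * S) - Real.log ε := by linarith
        have h2 := mul_le_mul_of_nonneg_left h1 (inv_pos.2 hK0).le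
        have h3 : K⁻¹ * (K * A₂) = A₂ := by field_simp
        rw [h3] at h2
        linarith [h2]
      rw [hsplit]
      linarith
    rcases le_or_gt θ₀ S with hcase | hcase
    · refine main θ₀ hθ₀mem.1 (by linarith) ?_
      intro θ hθ
      have h1 : |C θ₀ - C θ| ≤ K * |θ₀ - θ| := hCK' θ₀ θ
      have h2 : |θ₀ - θ| = θ - θ₀ := by
        rw [abs_sub_comm, abs_of_nonneg (by linarith [hθ.1])]
      rw [h2, hCθ₀] at h1
      have h3 : M - C θ ≤ K * (θ - θ₀) := le_trans (le_abs_self _) h1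
      simp only [hl_def]
      linarith
    · refine main2 θ₀ hcase.le hθ₀mem.2 ?_
      intro θ hθ
      have h1 : |C θ₀ - C θ| ≤ K * |θ₀ - θ| := hCK' θ₀ θ
      have h2 : |θ₀ - θ| = θ₀ - θ := abs_of_nonneg (by linarith [hθ.2])
      rw [h2, hCθ₀] at h1
      have h3 : M - C θ ≤ K * (θ₀ - θ) := le_trans (le_abs_self _) h1
      simp only [hl_def]
      linarith
  -- F is big near M
  have hFbig : ∃ llo : ℝ, llo ∈ Set.Ioo M (M+1) ∧ A < F llo := by
    set δ : ℝ := 2 * Bc + 1 with hδ_def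
    have hδ0 : 0 < δ := by positivity
    set c₂ : ℝ := (δ + (M + 1 - m)) * (2*S) with hc₂_def
    have hc₂0 : 0 ≤ c₂ := by
      have : 0 < δ + (M + 1 - m) := by simp only [hδ_def]; nlinarith [hmM]
      positivity
    set A₂ : ℝ := 2 * ((M+1) * A + 1 + Bc * c₂) with hA₂_def
    have hA₂0 : 0 < A₂ := by
      have h1 : 0 < (M+1) * A := by positivity
      have h2 : 0 ≤ Bc * c₂ := mul_nonneg hBc0 hc₂0
      simp only [hA₂_def]; linarith
    obtain ⟨l, hlmem, hLl⟩ := hLbig A₂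
    obtain ⟨hl, hl1⟩ := hlmem
    refine ⟨l, ⟨hl, hl1⟩, ?_⟩
    have hl0 : 0 < l := lt_trans hM0 hl
    -- pointwise lower bound on c · log
    have hptw : ∀ θ ∈ Set.Icc (0:ℝ) (2*S),
        -(Bc * (1/δ * (1/(l - C θ)) + (δ + (M + 1 - m)))) ≤ c θ * Real.log (l - C θ) := by
      intro θ _
      have hu0 : 0 < l - C θ := hupos l hl θ
      have h1 : |Real.log (l - C θ)| ≤ 2 / Real.sqrt (l - C θ) + (l - C θ) :=
        abs_log_le hu0
      have h2 : 2 / Real.sqrt (l - C θ) ≤ 1/(δ * (l - C θ)) + δ := two_div_sqrt_le hu0 hδ0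
      have h3 : l - C θ ≤ M + 1 - m := by linarith [hmle θ]
      have h4 : |Real.log (l - C θ)| ≤ 1/(δ * (l - C θ)) + (δ + (M + 1 - m)) := by linarith
      have h5 : |c θ * Real.log (l - C θ)|
          ≤ Bc * (1/(δ * (l - C θ)) + (δ + (M + 1 - m))) := by
        rw [abs_mul]
        exact mul_le_mul (hBc θ) h4 (abs_nonneg _) hBc0
      have h6 : 1/δ * (1/(l - C θ)) = 1/(δ * (l - C θ)) := one_div_mul_one_div δ (l - C θ)
      rw [h6]
      linarith [neg_abs_le (c θ * Real.log (l - C θ))]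
    -- integrate the pointwise bound
    have hintlhs : IntervalIntegrable
        (fun θ => -(Bc * (1/δ * (1/(l - C θ)) + (δ + (M + 1 - m))))) volume 0 (2*S) :=
      ((((hint_1u l hl).const_mul (1/δ)).add intervalIntegrable_const).const_mul Bc).neg
    have hmono := intervalIntegral.integral_mono_on hT.le hintlhs (hint_clog l hl) hptw
    have hE : (∫ θ in (0:ℝ)..(2*S), -(Bc * (1/δ * (1/(l - C θ)) + (δ + (M + 1 - m)))))
        = -(Bc * (1/δ * L l + (δ + (M + 1 - m)) * (2*S))) := by
      rw [intervalIntegral.integral_neg, intervalIntegral.integral_const_mul,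
        intervalIntegral.integral_add ((hint_1u l hl).const_mul (1/δ)) intervalIntegrable_const,
        intervalIntegral.integral_const_mul, intervalIntegral.integral_const, hL l hl]
      simp only [smul_eq_mul, sub_zero]
      ring
    rw [hE] at hmono
    -- combine with idF
    have hid := idF l hl
    have hL0 : 0 < L l := lt_of_lt_of_le hA₂0 hLl
    have hhalf : Bc * (1/δ * L l) ≤ L l / 2 := by
      have h1 : Bc * (1/δ * L l) = (Bc/δ) * L l := by ring
      have h2 : Bc/δ ≤ 1/2 := by
        rw [div_le_div_iff₀ hδ0 (by norm_num : (0:ℝ) < 2)]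
        simp only [hδ_def]; linarith
      rw [h1]
      calc (Bc/δ) * L l ≤ (1/2) * L l := mul_le_mul_of_nonneg_right h2 hL0.le
        _ = L l / 2 := by ring
    have hlF : (M+1) * A + 1 ≤ l * F l := by
      have h1 : l * F l ≥ L l - Bc * (1/δ * L l + (δ + (M + 1 - m)) * (2*S)) := by
        rw [hid]; linarith
      have h2 : Bc * (1/δ * L l + (δ + (M + 1 - m)) * (2*S))
          = Bc * (1/δ * L l) + Bc * c₂ := by simp only [hc₂_def]; ring
      have h3 : L l - (Bc * (1/δ * L l) + Bc * c₂) ≥ L l / 2 - Bc * c₂ := by linarith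
      have h4 : L l / 2 - Bc * c₂ ≥ A₂ / 2 - Bc * c₂ := by linarith
      have h5 : A₂ / 2 - Bc * c₂ = (M+1) * A + 1 := by simp only [hA₂_def]; ring
      linarith
    have h6 : l * A < (M+1) * A + 1 := by nlinarith
    have h7 : l * A < l * F l := lt_of_lt_of_le h6 hlF
    exact (mul_lt_mul_iff_right₀ hl0).1 h7
  -- F is small far away
  have hFsmall : ∃ lhi : ℝ, M + 2 < lhi ∧ F lhi < A := by
    set lhi : ℝ := M + 2 + (2*S*Bc + 1)/A with hlhi_def
    have hq0 : 0 < (2*S*Bc + 1)/A := by positivity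
    have h1 : M + 2 < lhi := by simp only [hlhi_def]; linarith
    have hlM : M < lhi := by linarith
    refine ⟨lhi, h1, ?_⟩
    have hFb : ‖F lhi‖ ≤ (Bc / (lhi - M)) * |2*S - 0| := by
      rw [hF _ hlM]
      exact intervalIntegral.norm_integral_le_of_norm_le_const (fun θ _ => by
        rw [Real.norm_eq_abs]; exact hbd1 lhi hlM c Bc hBc θ)
    rw [Real.norm_eq_abs, sub_zero, abs_of_pos hT] at hFb
    have hd : 0 < lhi - M := by linarith
    have hkey : Bc / (lhi - M) * (2*S) < A := by
      rw [div_mul_eq_mul_div, div_lt_iff₀ hd]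
      have hAx : A * ((2*S*Bc + 1)/A) = 2*S*Bc + 1 := by field_simp
      have : A * (lhi - M) = 2*A + (2*S*Bc + 1) := by
        simp only [hlhi_def]
        calc A * (M + 2 + (2*S*Bc + 1)/A - M) = 2*A + A * ((2*S*Bc + 1)/A) := by ring
          _ = 2*A + (2*S*Bc + 1) := by rw [hAx]
      rw [this]
      nlinarith
    calc F lhi ≤ |F lhi| := le_abs_self _
      _ ≤ Bc / (lhi - M) * (2*S) := hFb
      _ < A := hkey
  -- conclusion by IVT
  obtain ⟨llo, hllo, hAlo⟩ := hFbig
  obtain ⟨lhi, hlhi, hAhi⟩ := hFsmall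
  have hlolt : llo < lhi := by
    rcases hllo with ⟨h1, h2⟩
    linarith
  have hloM : M < llo := hllo.1
  have hsub : Set.Icc llo lhi ⊆ Set.Ioi M := fun x hx => lt_of_lt_of_le hloM hx.1
  have hcont : ContinuousOn F (Set.Icc llo lhi) := fun x hx =>
    ((hFd x (hsub hx)).continuousAt).continuousWithinAt
  have hivt := intermediate_value_Icc' hlolt.le hcont
  have hmem : A ∈ Set.Icc (F lhi) (F llo) := ⟨hAhi.le, hAlo.le⟩
  obtain ⟨l₀, hl₀mem, hFl₀⟩ := hivt hmem
  refine ⟨l₀, ⟨hsub hl₀mem, hFl₀⟩, ?_⟩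
  rintro y ⟨hy, hFy⟩
  exact hanti.injOn hy (hsub hl₀mem) (hFy.trans hFl₀.symm)
end

section
/- Assume M > 0, let Λ : (0, +∞) → (M, +∞) be the inverse of the (strictly decreasing, surjective) function L, and set 𝓕(ℓ) = F(Λ(ℓ)) for ℓ > 0. Then 𝓕″(ℓ) = −Λ′(ℓ)/Λ(ℓ)² for every ℓ > 0, lim_{ℓ→0⁺} 𝓕″(ℓ) = 1/(2S), and lim_{ℓ→+∞} 𝓕″(ℓ) = 0. -/
open MeasureTheory Filter Set Topology

/-- difference quotients along 1/(n+1) converge to the derivative -/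
private lemma slope_seq {f : ℝ → ℝ} {t d : ℝ} (hf : HasDerivAt f d t) :
    Tendsto (fun n : ℕ => (f (t + 1/(n+1)) - f t) / (1/(n+1))) atTop (𝓝 d) := by
  have h1 : Tendsto (fun n : ℕ => t + 1/(n+1)) atTop (𝓝[≠] t) := by
    apply tendsto_nhdsWithin_of_tendsto_nhds_of_eventually_within
    · simpa using tendsto_one_div_add_atTop_nhds_zero_nat.const_add t
    · filter_upwards with n
      have h : (0:ℝ) < 1/(n+1) := by positivity
      simp only [mem_compl_iff, mem_singleton_iff]
      intro hEq
      nlinarith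
  have h2 := (hasDerivAt_iff_tendsto_slope.1 hf).comp h1
  refine h2.congr fun n => ?_
  simp [Function.comp, slope_def_field]

/-- bounded measurable functions are interval integrable -/
private lemma bdd_ii {φ : ℝ → ℝ} (hφ : AEStronglyMeasurable φ volume) {B : ℝ}
    (hb : ∀ θ, |φ θ| ≤ B) (a b : ℝ) : IntervalIntegrable φ volume a b := by
  rw [intervalIntegrable_iff]
  refine Integrable.mono' (g := fun _ => B) (integrableOn_const measure_Ioc_lt_top.ne)
    hφ.restrict (ae_of_all _ fun θ => by simpa using hb θ)

/-- FTC for Lipschitz functions with a.e. derivative -/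
private lemma lipschitz_ftc {f g : ℝ → ℝ} {K : NNReal} (hf : LipschitzWith K f)
    (hg : AEStronglyMeasurable g volume)
    (hfg : ∀ᵐ θ : ℝ ∂volume, HasDerivAt f (g θ) θ)
    {a b : ℝ} (hab : a ≤ b) :
    ∫ t in a..b, g t = f b - f a := by
  have hfc : Continuous f := hf.continuous
  set h : ℕ → ℝ := fun n => 1 / (n + 1) with hh
  have hhpos : ∀ n : ℕ, 0 < h n := fun n => by positivity
  set D : ℕ → ℝ → ℝ := fun n t => (f (t + h n) - f t) / h n with hD
  have hDbd : ∀ n t, |D n t| ≤ (K : ℝ) := by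
    intro n t
    have h1 : |f (t + h n) - f t| ≤ K * |t + h n - t| := by
      have := hf.dist_le_mul (t + h n) t
      simpa [Real.dist_eq] using this
    rw [abs_div, abs_of_pos (hhpos n)]
    rw [div_le_iff₀ (hhpos n)]
    calc |f (t + h n) - f t| ≤ K * |t + h n - t| := h1
      _ = K * h n := by rw [add_sub_cancel_left, abs_of_pos (hhpos n)]
  -- convergence of integrals ∫ D n → f b - f a
  have hfi : ∀ u v : ℝ, IntervalIntegrable f volume u v := fun u v =>
    hfc.intervalIntegrable u v
  have key : ∀ n, ∫ t in a..b, D n t = ((∫ t in b..(b + h n), f t) - ∫ t in a..(a + h n), f t) / h n := by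
    intro n
    have h2 : ∀ t ∈ uIcc a b, True := fun _ _ => trivial
    have e1 : ∫ t in a..b, D n t = ((∫ t in a..b, f (t + h n)) - ∫ t in a..b, f t) / h n := by
      rw [← intervalIntegral.integral_sub ((show Continuous fun t : ℝ => f (t + h n) by fun_prop).intervalIntegrable a b) (hfi a b)]
      rw [← intervalIntegral.integral_div]
    rw [e1, intervalIntegral.integral_comp_add_right]
    congr 1
    have i1 := intervalIntegral.integral_add_adjacent_intervals (hfi (a + h n) b) (hfi b (b + h n))
    have i2 := intervalIntegral.integral_add_adjacent_intervals (hfi a (a + h n)) (hfi (a + h n) b)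
    linarith [i1, i2]
  have hφb : Tendsto (fun n => (∫ t in b..(b + h n), f t) / h n) atTop (𝓝 (f b)) := by
    have hd : HasDerivAt (fun u => ∫ t in b..u, f t) (f b) b :=
      intervalIntegral.integral_hasDerivAt_right (hfi b b)
        (hfc.stronglyMeasurableAtFilter _ _) hfc.continuousAt
    have := slope_seq hd
    simp only [intervalIntegral.integral_same, sub_zero] at this
    exact this
  have hφa : Tendsto (fun n => (∫ t in a..(a + h n), f t) / h n) atTop (𝓝 (f a)) := by
    have hd : HasDerivAt (fun u => ∫ t in a..u, f t) (f a) a :=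
      intervalIntegral.integral_hasDerivAt_right (hfi a a)
        (hfc.stronglyMeasurableAtFilter _ _) hfc.continuousAt
    have := slope_seq hd
    simp only [intervalIntegral.integral_same, sub_zero] at this
    exact this
  have hlim1 : Tendsto (fun n => ∫ t in a..b, D n t) atTop (𝓝 (f b - f a)) := by
    simp_rw [key, sub_div]
    exact hφb.sub hφa
  -- dominated convergence
  have hlim2 : Tendsto (fun n => ∫ t in a..b, D n t) atTop (𝓝 (∫ t in a..b, g t)) := by
    simp_rw [intervalIntegral.integral_of_le hab]
    apply MeasureTheory.tendsto_integral_of_dominated_convergence (fun _ => (K:ℝ))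
    · intro n
      exact ((hfc.comp (by continuity)).sub hfc).div_const _ |>.aestronglyMeasurable.restrict
    · exact (integrableOn_const measure_Ioc_lt_top.ne)
    · intro n
      exact ae_of_all _ fun t => by simpa using hDbd n t
    · refine ae_restrict_of_ae (hfg.mono fun t ht => ?_)
      exact slope_seq ht
  exact tendsto_nhds_unique hlim2 hlim1


private lemma hasDerivAt_int {S M l : ℝ} {C c : ℝ → ℝ}
    (hC : Continuous C) (hc : Measurable c) {B : ℝ} (hB : ∀ θ, |c θ| ≤ B)
    (hCM : ∀ θ, C θ ≤ M) (hl : M < l) :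
    HasDerivAt (fun x => ∫ θ in (0:ℝ)..(2*S), c θ / (x - C θ))
      (-∫ θ in (0:ℝ)..(2*S), c θ / (l - C θ)^2) l := by
  set ε := (l - M)/2 with hε
  have hεpos : 0 < ε := by rw [hε]; linarith
  have hball : ∀ x ∈ Metric.ball l ε, ∀ θ, ε ≤ x - C θ := by
    intro x hx θ
    rw [Metric.mem_ball, Real.dist_eq, abs_lt] at hx
    have := hCM θ
    rw [hε] at *
    linarith
  have hBnn : 0 ≤ B := (abs_nonneg _).trans (hB 0)
  have measF : ∀ x : ℝ, AEStronglyMeasurable (fun θ => c θ / (x - C θ)) (volume.restrict (Set.uIoc (0:ℝ) (2*S))) :=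
    fun x => ((hc.div ((measurable_const.sub hC.measurable))).aestronglyMeasurable).restrict
  have measF' : AEStronglyMeasurable (fun θ => -(c θ / (l - C θ)^2)) (volume.restrict (Set.uIoc (0:ℝ) (2*S))) :=
    (((hc.div (((measurable_const.sub hC.measurable)).pow_const 2)).neg).aestronglyMeasurable).restrict
  have hli : ∀ θ, ε ≤ l - C θ := fun θ => hball l (Metric.mem_ball_self hεpos) θ
  have hFint : IntervalIntegrable (fun θ => c θ / (l - C θ)) volume 0 (2*S) := by
    refine bdd_ii ((hc.div ((measurable_const.sub hC.measurable))).aestronglyMeasurable)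
      (B := B / ε) (fun θ => ?_) 0 (2*S)
    show |c θ / (l - C θ)| ≤ B / ε
    rw [abs_div]
    exact div_le_div₀ hBnn (hB θ) hεpos ((hli θ).trans (le_abs_self _))
  have hbound : ∀ᵐ θ ∂(volume : Measure ℝ), θ ∈ Set.uIoc (0:ℝ) (2*S) →
      ∀ x ∈ Metric.ball l ε, ‖-(c θ / (x - C θ)^2)‖ ≤ B / ε^2 := by
    refine ae_of_all _ fun θ _ x hx => ?_
    have h1 : ε ≤ x - C θ := hball x hx θ
    have h2 : ε^2 ≤ |(x - C θ)^2| := by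
      rw [abs_of_nonneg (by positivity)]
      exact pow_le_pow_left₀ hεpos.le h1 2
    rw [norm_neg, Real.norm_eq_abs, abs_div]
    exact div_le_div₀ hBnn (hB θ) (by positivity) h2
  have hboundint : IntervalIntegrable (fun _ : ℝ => B / ε^2) volume 0 (2*S) :=
    intervalIntegrable_const
  have hdiff : ∀ᵐ θ ∂(volume : Measure ℝ), θ ∈ Set.uIoc (0:ℝ) (2*S) →
      ∀ x ∈ Metric.ball l ε, HasDerivAt (fun x => c θ / (x - C θ)) (-(c θ / (x - C θ)^2)) x := by
    refine ae_of_all _ fun θ _ x hx => ?_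
    have hεx := hball x hx θ
    have hne : x - C θ ≠ 0 := by linarith
    have h1 : HasDerivAt (fun x : ℝ => x - C θ) 1 x := (hasDerivAt_id x).sub_const _
    have h2 := (h1.inv hne).const_mul (c θ)
    have h3 : c θ * -(1 / (x - C θ) ^ 2) = -(c θ / (x - C θ)^2) := by ring
    simp only [div_eq_mul_inv]
    exact h2.congr_deriv (by ring)
  have H := intervalIntegral.hasDerivAt_integral_of_dominated_loc_of_deriv_le
    (F := fun x θ => c θ / (x - C θ)) (F' := fun x θ => -(c θ / (x - C θ)^2))
    (bound := fun _ => B / ε^2)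
    (Metric.ball_mem_nhds l hεpos) (Filter.Eventually.of_forall measF) hFint measF' hbound hboundint hdiff
  have e : ∫ θ in (0:ℝ)..(2*S), -(c θ / (l - C θ)^2) = -∫ θ in (0:ℝ)..(2*S), c θ / (l - C θ)^2 :=
    intervalIntegral.integral_neg
  exact e ▸ H.2


set_option maxHeartbeats 1600000 in
theorem stmt13
    (S : ℝ) (hS : 0 < S)
    (C Sg c s : ℝ → ℝ)
    (hC_lip : ∃ K : NNReal, LipschitzWith K C)
    (hSg_lip : ∃ K : NNReal, LipschitzWith K Sg)
    (hC_per : Function.Periodic C (2 * S))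
    (hSg_per : Function.Periodic Sg (2 * S))
    (hc_meas : Measurable c) (hs_meas : Measurable s)
    (hc_bdd : ∃ B : ℝ, ∀ θ, |c θ| ≤ B) (hs_bdd : ∃ B : ℝ, ∀ θ, |s θ| ≤ B)
    (hconv : ∀ᵐ θ ∂(volume : Measure ℝ), HasDerivAt C (-(s θ)) θ ∧ HasDerivAt Sg (c θ) θ ∧
      c θ * C θ + s θ * Sg θ = 1)
    (M : ℝ) (hM : IsGreatest (C '' Set.Icc 0 (2 * S)) M)
    (L F : ℝ → ℝ)
    (hL : ∀ l : ℝ, M < l → L l = ∫ θ in (0:ℝ)..(2*S), 1 / (l - C θ))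
    (hF : ∀ l : ℝ, M < l → F l = ∫ θ in (0:ℝ)..(2*S), c θ / (l - C θ))
    (hM0 : 0 < M)
    (Λ : ℝ → ℝ)
    (hΛmem : ∀ x : ℝ, 0 < x → M < Λ x)
    (hΛright : ∀ x : ℝ, 0 < x → L (Λ x) = x)
    (hΛleft : ∀ l : ℝ, M < l → Λ (L l) = l)
    (G : ℝ → ℝ) (hG : ∀ x : ℝ, 0 < x → G x = F (Λ x)) :
    (∀ x : ℝ, 0 < x → deriv (deriv G) x = -(deriv Λ x) / (Λ x) ^ 2) ∧
    Tendsto (deriv (deriv G)) (𝓝[>] (0:ℝ)) (𝓝 (1 / (2 * S))) ∧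
    Tendsto (deriv (deriv G)) atTop (𝓝 0) := by
  obtain ⟨KC, hKC⟩ := hC_lip
  obtain ⟨KS, hKS⟩ := hSg_lip
  obtain ⟨Bc, hBc⟩ := hc_bdd
  obtain ⟨Bs, hBs⟩ := hs_bdd
  have hCcont : Continuous C := hKC.continuous
  have hScont : Continuous Sg := hKS.continuous
  have h2S : (0:ℝ) < 2 * S := by linarith
  -- global upper bound for C
  have hCM : ∀ θ, C θ ≤ M := by
    intro θ
    obtain ⟨y, hy, hEq⟩ := hC_per.exists_mem_Ico₀ h2S θ
    rw [hEq]
    exact hM.2 ⟨y, ⟨hy.1, hy.2.le⟩, rfl⟩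
  -- global lower bound for C
  obtain ⟨θm, hθm, hminC⟩ := isCompact_Icc.exists_isMinOn (nonempty_Icc.2 h2S.le)
    hCcont.continuousOn
  set m := C θm with hm
  have hmC : ∀ θ, m ≤ C θ := by
    intro θ
    obtain ⟨y, hy, hEq⟩ := hC_per.exists_mem_Ico₀ h2S θ
    rw [hEq]
    exact hminC ⟨hy.1, hy.2.le⟩
  have hmM : m ≤ M := hCM θm
  -- bound for Sg
  obtain ⟨θs, hθs, hmaxS⟩ := isCompact_Icc.exists_isMaxOn (nonempty_Icc.2 h2S.le)
    (continuous_abs.comp hScont).continuousOn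
  set BS := |Sg θs| with hBSdef
  have hBS : ∀ θ, |Sg θ| ≤ BS := by
    intro θ
    obtain ⟨y, hy, hEq⟩ := hSg_per.exists_mem_Ico₀ h2S θ
    rw [hEq]
    exact hmaxS ⟨hy.1, hy.2.le⟩
  have hBSnn : 0 ≤ BS := (abs_nonneg _).trans (hBS 0)
  have hBcnn : 0 ≤ Bc := (abs_nonneg _).trans (hBc 0)
  have hBsnn : 0 ≤ Bs := (abs_nonneg _).trans (hBs 0)
  set I2 : ℝ → ℝ := fun l => ∫ θ in (0:ℝ)..(2*S), 1/(l - C θ)^2 with hI2def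
  set J2 : ℝ → ℝ := fun l => ∫ θ in (0:ℝ)..(2*S), c θ/(l - C θ)^2 with hJ2def
  -- basic positivity of denominators
  have hden : ∀ l, M < l → ∀ θ, 0 < l - C θ := fun l hl θ => by linarith [hCM θ]
  have hdenm : ∀ l, M < l → ∀ θ, l - C θ ≤ l - m := fun l hl θ => by linarith [hmC θ]
  have hdenM : ∀ l, M < l → ∀ θ, l - M ≤ l - C θ := fun l hl θ => by linarith [hCM θ]
  -- integrability
  have hcont1 : ∀ l, M < l → Continuous (fun θ => 1/(l - C θ)) := by
    intro l hl
    exact continuous_const.div (continuous_const.sub hCcont) (fun θ => (hden l hl θ).ne')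
  have hcont2 : ∀ l, M < l → Continuous (fun θ => 1/(l - C θ)^2) := by
    intro l hl
    exact continuous_const.div ((continuous_const.sub hCcont).pow 2)
      (fun θ => pow_ne_zero 2 (hden l hl θ).ne')
  have hintc2 : ∀ l, M < l → IntervalIntegrable (fun θ => c θ/(l - C θ)^2) volume 0 (2*S) := by
    intro l hl
    refine bdd_ii ((hc_meas.div ((measurable_const.sub hCcont.measurable).pow_const 2)).aestronglyMeasurable)
      (B := Bc / (l - M)^2) (fun θ => ?_) 0 (2*S)
    show |c θ / (l - C θ)^2| ≤ Bc / (l - M)^2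
    rw [abs_div]
    have h1 : (l - M)^2 ≤ |(l - C θ)^2| := by
      rw [abs_of_nonneg (by positivity)]
      have := hdenM l hl θ
      have := hden l hl θ
      nlinarith [hdenM l hl θ]
    exact div_le_div₀ hBcnn (hBc θ) (by nlinarith) h1
  -- bounds on I2 and L
  have hI2ub : ∀ l, M < l → I2 l ≤ 2*S/(l - M)^2 := by
    intro l hl
    have h1 : ∫ θ in (0:ℝ)..(2*S), 1/(l - M)^2 = 2*S/(l - M)^2 := by
      rw [intervalIntegral.integral_const]; rw [smul_eq_mul]; ring
    rw [← h1]
    refine intervalIntegral.integral_mono_on h2S.le ((hcont2 l hl).intervalIntegrable _ _)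
      (intervalIntegrable_const) (fun θ _ => ?_)
    have h2 := hden l hl θ
    have h3 := hdenM l hl θ
    gcongr <;> nlinarith
  have hI2lb : ∀ l, M < l → 2*S/(l - m)^2 ≤ I2 l := by
    intro l hl
    have h1 : ∫ θ in (0:ℝ)..(2*S), 1/(l - m)^2 = 2*S/(l - m)^2 := by
      rw [intervalIntegral.integral_const]; rw [smul_eq_mul]; ring
    rw [← h1]
    refine intervalIntegral.integral_mono_on h2S.le (intervalIntegrable_const)
      ((hcont2 l hl).intervalIntegrable _ _) (fun θ _ => ?_)
    have h2 := hden l hl θ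
    have h3 := hdenm l hl θ
    gcongr <;> nlinarith
  have hI2pos : ∀ l, M < l → 0 < I2 l := by
    intro l hl
    refine lt_of_lt_of_le ?_ (hI2lb l hl)
    have : 0 < l - m := by linarith
    positivity
  have hLlb : ∀ l, M < l → 2*S/(l - m) ≤ L l := by
    intro l hl
    rw [hL l hl]
    have h1 : ∫ θ in (0:ℝ)..(2*S), 1/(l - m) = 2*S/(l - m) := by
      rw [intervalIntegral.integral_const]; rw [smul_eq_mul]; ring
    rw [← h1]
    refine intervalIntegral.integral_mono_on h2S.le (intervalIntegrable_const)
      ((hcont1 l hl).intervalIntegrable _ _) (fun θ _ => ?_)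
    have h2 := hden l hl θ
    have h3 := hdenm l hl θ
    gcongr <;> nlinarith
  have hLpos : ∀ l, M < l → 0 < L l := by
    intro l hl
    refine lt_of_lt_of_le ?_ (hLlb l hl)
    have : 0 < l - m := by linarith
    positivity
  have hI2Llb : ∀ l, M < l → L l / (l - m) ≤ I2 l := by
    intro l hl
    have h1 : (1/(l-m)) * L l ≤ I2 l := by
      rw [hL l hl, ← intervalIntegral.integral_const_mul]
      refine intervalIntegral.integral_mono_on h2S.le
        ((continuous_const.mul (hcont1 l hl)).intervalIntegrable _ _)
        ((hcont2 l hl).intervalIntegrable _ _) (fun θ _ => ?_)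
      have h2 := hden l hl θ
      have h3 := hdenm l hl θ
      have h4 : 0 < l - m := by linarith
      rw [div_mul_div_comm, one_mul]
      apply one_div_le_one_div_of_le (by positivity)
      nlinarith
    calc L l / (l-m) = (1/(l-m)) * L l := by ring
      _ ≤ I2 l := h1
  -- derivatives of L and F
  have hLd : ∀ l, M < l → HasDerivAt L (-(I2 l)) l := by
    intro l hl
    have h := hasDerivAt_int (S := S) (l := l) (c := fun _ => (1:ℝ)) hCcont measurable_const
      (B := 1) (fun θ => by norm_num) hCM hl
    refine HasDerivAt.congr_of_eventuallyEq h ?_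
    filter_upwards [Ioi_mem_nhds hl] with x hx
    exact hL x hx
  have hFd : ∀ l, M < l → HasDerivAt F (-(J2 l)) l := by
    intro l hl
    have h := hasDerivAt_int (S := S) (l := l) hCcont hc_meas hBc hCM hl
    refine HasDerivAt.congr_of_eventuallyEq h ?_
    filter_upwards [Ioi_mem_nhds hl] with x hx
    exact hF x hx
  -- the key identity I2 l = l * J2 l
  have hid : ∀ l, M < l → I2 l = l * J2 l := by
    intro l hl
    have hlm : ∀ θ, (0:ℝ) < l - C θ := hden l hl
    have hML : (0:ℝ) < l - M := by linarith
    set f : ℝ → ℝ := fun θ => Sg θ * (l - C θ)⁻¹ with hfdef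
    set g : ℝ → ℝ := fun θ => c θ / (l - C θ) - s θ * Sg θ / (l - C θ)^2 with hgdef
    set K0 : ℝ := BS * ((KC:ℝ)/(l-M)^2) + (KS:ℝ)/(l-M) with hK0def
    have hK0nn : 0 ≤ K0 := by positivity
    have hinvb : ∀ x, (l - C x)⁻¹ ≤ (l - M)⁻¹ := by
      intro x
      exact inv_anti₀ hML (hdenM l hl x)
    have key : ∀ x y, |f x - f y| ≤ K0 * |x - y| := by
      intro x y
      have hCd : |C x - C y| ≤ (KC:ℝ) * |x - y| := by
        simpa [Real.dist_eq] using hKC.dist_le_mul x y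
      have hSd : |Sg x - Sg y| ≤ (KS:ℝ) * |x - y| := by
        simpa [Real.dist_eq] using hKS.dist_le_mul x y
      have e : f x - f y = Sg x * ((l - C x)⁻¹ - (l - C y)⁻¹)
          + (l - C y)⁻¹ * (Sg x - Sg y) := by
        rw [hfdef]; ring
      have h1 : |(l - C x)⁻¹ - (l - C y)⁻¹| ≤ (KC:ℝ)/(l-M)^2 * |x - y| := by
        have e2 : (l - C x)⁻¹ - (l - C y)⁻¹ = (C x - C y) * ((l - C x)⁻¹ * (l - C y)⁻¹) := by
          have hnex := (hlm x).ne'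
          have hney := (hlm y).ne'
          field_simp
          ring
        rw [e2, abs_mul]
        have h3 : |(l - C x)⁻¹ * (l - C y)⁻¹| ≤ (l-M)⁻¹ * (l-M)⁻¹ := by
          rw [abs_mul]
          have hx1 := hlm x; have hy1 := hlm y
          refine mul_le_mul ?_ ?_ (abs_nonneg _) (by positivity)
          · rw [abs_of_pos (by positivity)]; exact hinvb x
          · rw [abs_of_pos (by positivity)]; exact hinvb y
        calc |C x - C y| * |(l - C x)⁻¹ * (l - C y)⁻¹|
            ≤ ((KC:ℝ) * |x - y|) * ((l-M)⁻¹ * (l-M)⁻¹) := by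
              exact mul_le_mul hCd h3 (abs_nonneg _) (by positivity)
          _ = (KC:ℝ)/(l-M)^2 * |x - y| := by rw [div_eq_mul_inv, sq, mul_inv]; ring
      have h2 : |(l - C y)⁻¹ * (Sg x - Sg y)| ≤ (KS:ℝ)/(l-M) * |x - y| := by
        rw [abs_mul]
        have hy1 := hlm y
        calc |(l - C y)⁻¹| * |Sg x - Sg y| ≤ (l-M)⁻¹ * ((KS:ℝ) * |x - y|) := by
              refine mul_le_mul ?_ hSd (abs_nonneg _) (by positivity)
              rw [abs_of_pos (by positivity)]; exact hinvb y
          _ = (KS:ℝ)/(l-M) * |x - y| := by rw [div_eq_mul_inv]; ring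
      calc |f x - f y| ≤ |Sg x * ((l - C x)⁻¹ - (l - C y)⁻¹)|
            + |(l - C y)⁻¹ * (Sg x - Sg y)| := by rw [e]; exact abs_add_le _ _
        _ ≤ BS * ((KC:ℝ)/(l-M)^2 * |x - y|) + (KS:ℝ)/(l-M) * |x - y| := by
            refine add_le_add ?_ h2
            rw [abs_mul]
            exact mul_le_mul (hBS x) h1 (abs_nonneg _) hBSnn
        _ = K0 * |x - y| := by rw [hK0def]; ring
    have hf_lip : LipschitzWith K0.toNNReal f := by
      refine LipschitzWith.of_dist_le_mul fun x y => ?_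
      rw [Real.dist_eq, Real.dist_eq, Real.coe_toNNReal _ hK0nn]
      exact key x y
    have hfg : ∀ᵐ θ : ℝ ∂volume, HasDerivAt f (g θ) θ := by
      refine hconv.mono fun θ ⟨hCd, hSd, hPy⟩ => ?_
      have hne : l - C θ ≠ 0 := (hlm θ).ne'
      have h1 : HasDerivAt (fun t => l - C t) (s θ) θ := by
        simpa using hCd.const_sub l
      have h2 := h1.inv hne
      have h3 := hSd.mul h2
      refine h3.congr_deriv ?_
      show c θ * (l - C θ)⁻¹ + Sg θ * (-s θ / (l - C θ)^2) = g θ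
      rw [hgdef]
      field_simp
      ring
    have hgmeas : AEStronglyMeasurable g volume := by
      refine Measurable.aestronglyMeasurable ?_
      exact (hc_meas.div (measurable_const.sub hCcont.measurable)).sub
        (((hs_meas.mul hScont.measurable)).div
          ((measurable_const.sub hCcont.measurable).pow_const 2))
    have hftc := lipschitz_ftc hf_lip hgmeas hfg h2S.le
    have hper : f (2*S) = f 0 := by
      have hc1 : C (2*S) = C 0 := by simpa using hC_per 0
      have hs1 : Sg (2*S) = Sg 0 := by simpa using hSg_per 0
      rw [hfdef]; simp only [hc1, hs1]
    have hg0 : ∫ θ in (0:ℝ)..(2*S), g θ = 0 := by rw [hftc, hper, sub_self]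
    have hae : ∀ᵐ θ : ℝ ∂volume, θ ∈ Set.uIoc (0:ℝ) (2*S) →
        g θ = l * (c θ/(l - C θ)^2) - 1/(l - C θ)^2 := by
      refine hconv.mono fun θ ⟨_, _, hPy⟩ _ => ?_
      have hne : l - C θ ≠ 0 := (hlm θ).ne'
      have hs1 : s θ * Sg θ = 1 - c θ * C θ := by linarith
      rw [hgdef]
      simp only
      rw [hs1]
      field_simp
      ring
    have hInt : ∫ θ in (0:ℝ)..(2*S), g θ = l * J2 l - I2 l := by
      rw [intervalIntegral.integral_congr_ae hae]
      rw [intervalIntegral.integral_sub (((hintc2 l hl).const_mul l))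
        ((hcont2 l hl).intervalIntegrable _ _)]
      rw [intervalIntegral.integral_const_mul]
    rw [hInt] at hg0
    linarith
  -- monotonicity of L
  have hLanti : StrictAntiOn L (Ioi M) := by
    refine strictAntiOn_of_deriv_neg (convex_Ioi M)
      (fun l hl => ((hLd l (mem_Ioi.1 hl)).continuousAt.continuousWithinAt)) ?_
    intro l hl
    rw [interior_Ioi] at hl
    rw [(hLd l (mem_Ioi.1 hl)).deriv]
    exact neg_lt_zero.2 (hI2pos l (mem_Ioi.1 hl))
  have hLantitone : AntitoneOn L (Ioi M) := hLanti.antitoneOn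
  -- comparison lemmas
  have hΛlt : ∀ x l', 0 < x → M < l' → x < L l' → l' < Λ x := by
    intro x l' hx hl' hxl
    by_contra h
    push_neg at h
    have h2 : L l' ≤ L (Λ x) := hLantitone (mem_Ioi.2 (hΛmem x hx)) (mem_Ioi.2 hl') h
    rw [hΛright x hx] at h2
    linarith
  have hΛgt' : ∀ x l', 0 < x → M < l' → L l' < x → Λ x < l' := by
    intro x l' hx hl' hxl
    by_contra h
    push_neg at h
    have h2 : L (Λ x) ≤ L l' := hLantitone (mem_Ioi.2 hl') (mem_Ioi.2 (hΛmem x hx)) h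
    rw [hΛright x hx] at h2
    linarith
  -- continuity of Λ
  have hΛcont : ∀ x, 0 < x → ContinuousAt Λ x := by
    intro x hx
    rw [ContinuousAt, tendsto_order]
    constructor
    · intro a ha
      set p := max a ((M + Λ x)/2) with hp
      have hΛM := hΛmem x hx
      have hpM : M < p := lt_max_of_lt_right (by linarith)
      have hpΛ : p < Λ x := max_lt ha (by linarith)
      have hLp : x < L p := by
        have h1 := hLanti (mem_Ioi.2 hpM) (mem_Ioi.2 hΛM) hpΛ
        rwa [hΛright x hx] at h1
      filter_upwards [Ioo_mem_nhds hx hLp] with y hy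
      exact lt_of_le_of_lt (le_max_left _ _) (hΛlt y p hy.1 hpM hy.2)
    · intro b hb
      have hΛM := hΛmem x hx
      have hbM : M < b := hΛM.trans hb
      have hLb : L b < x := by
        have h1 := hLanti (mem_Ioi.2 hΛM) (mem_Ioi.2 hbM) hb
        rwa [hΛright x hx] at h1
      filter_upwards [Ioi_mem_nhds hLb] with y hy
      exact hΛgt' y b ((hLpos b hbM).trans hy) hbM hy
  -- derivative of Λ
  have hΛd : ∀ x, 0 < x → HasDerivAt Λ (-(I2 (Λ x)))⁻¹ x := by
    intro x hx
    refine HasDerivAt.of_local_left_inverse (hΛcont x hx) (hLd _ (hΛmem x hx)) ?_ ?_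
    · exact (neg_lt_zero.2 (hI2pos _ (hΛmem x hx))).ne
    · filter_upwards [Ioi_mem_nhds hx] with y hy using hΛright y hy
  have hΛpos : ∀ x, 0 < x → 0 < Λ x := fun x hx => hM0.trans (hΛmem x hx)
  -- first derivative of G
  have hG1 : ∀ x, 0 < x → HasDerivAt G (Λ x)⁻¹ x := by
    intro x hx
    have h1 := (hFd (Λ x) (hΛmem x hx)).comp x (hΛd x hx)
    have hI2p := hI2pos (Λ x) (hΛmem x hx)
    have hΛp := hΛpos x hx
    have hJ : J2 (Λ x) = I2 (Λ x) / Λ x := by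
      rw [hid (Λ x) (hΛmem x hx)]
      field_simp
    have hval : -(J2 (Λ x)) * (-(I2 (Λ x)))⁻¹ = (Λ x)⁻¹ := by
      rw [hJ]
      field_simp
    have h2 := h1.congr_deriv hval
    refine h2.congr_of_eventuallyEq ?_
    filter_upwards [Ioi_mem_nhds hx] with y hy using hG y hy
  have hdG : ∀ x, 0 < x → deriv G x = (Λ x)⁻¹ := fun x hx => (hG1 x hx).deriv
  -- second derivative
  have hG2 : ∀ x, 0 < x → HasDerivAt (deriv G) (-((-(I2 (Λ x)))⁻¹) / (Λ x)^2) x := by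
    intro x hx
    have h1 := (hΛd x hx).inv (hΛpos x hx).ne'
    refine h1.congr_of_eventuallyEq ?_
    filter_upwards [Ioi_mem_nhds hx] with y hy using hdG y hy
  have part1 : ∀ x, 0 < x → deriv (deriv G) x = -(deriv Λ x) / (Λ x)^2 := by
    intro x hx
    rw [(hG2 x hx).deriv, (hΛd x hx).deriv]
  -- explicit formula
  have hval2 : ∀ x, 0 < x → deriv (deriv G) x = ((Λ x)^2 * I2 (Λ x))⁻¹ := by
    intro x hx
    rw [(hG2 x hx).deriv]
    have hI2p := hI2pos (Λ x) (hΛmem x hx)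
    have hΛp := hΛpos x hx
    field_simp
  -- limit of H at infinity
  have hHtend : Tendsto (fun l : ℝ => (l^2 * I2 l)⁻¹) atTop (𝓝 (1/(2*S))) := by
    have hlowbase : Tendsto (fun l : ℝ => (1 - M/l)^2/(2*S)) atTop (𝓝 (1/(2*S))) := by
      have h1 : Tendsto (fun l : ℝ => 1 - M/l) atTop (𝓝 1) := by
        have := Tendsto.div_atTop (tendsto_const_nhds (x := M)) tendsto_id
        simpa using tendsto_const_nhds.sub this
      have h2 := (h1.pow 2).div_const (2*S)
      simpa using h2
    have hupbase : Tendsto (fun l : ℝ => (1 - m/l)^2/(2*S)) atTop (𝓝 (1/(2*S))) := by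
      have h1 : Tendsto (fun l : ℝ => 1 - m/l) atTop (𝓝 1) := by
        have := Tendsto.div_atTop (tendsto_const_nhds (x := m)) tendsto_id
        simpa using tendsto_const_nhds.sub this
      have h2 := (h1.pow 2).div_const (2*S)
      simpa using h2
    refine tendsto_of_tendsto_of_tendsto_of_le_of_le' hlowbase hupbase ?_ ?_
    · filter_upwards [eventually_gt_atTop M, eventually_gt_atTop (0:ℝ)] with l hl hl0
      have hI2p := hI2pos l hl
      have h1 : l^2 * I2 l ≤ l^2 * (2*S/(l - M)^2) := by
        have := hI2ub l hl
        gcongr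
      have hML : 0 < l - M := by linarith
      have e : (l^2 * (2*S/(l - M)^2))⁻¹ = (1 - M/l)^2/(2*S) := by
        have h5 : l ≠ 0 := hl0.ne'
        have h6 : l - M ≠ 0 := hML.ne'
        have h7 : (2:ℝ)*S ≠ 0 := h2S.ne'
        field_simp
      rw [← e]
      exact inv_anti₀ (by positivity) h1
    · filter_upwards [eventually_gt_atTop M, eventually_gt_atTop (0:ℝ)] with l hl hl0
      have hI2p := hI2pos l hl
      have hlm0 : 0 < l - m := by linarith
      have h1 : l^2 * (2*S/(l - m)^2) ≤ l^2 * I2 l := by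
        have := hI2lb l hl
        gcongr
      have e : (l^2 * (2*S/(l - m)^2))⁻¹ = (1 - m/l)^2/(2*S) := by
        have h5 : l ≠ 0 := hl0.ne'
        have h6 : l - m ≠ 0 := hlm0.ne'
        have h7 : (2:ℝ)*S ≠ 0 := h2S.ne'
        field_simp
      rw [← e]
      exact inv_anti₀ (by positivity) h1
  -- Λ tends to infinity at 0+
  have hΛtop : Tendsto Λ (𝓝[>] (0:ℝ)) atTop := by
    rw [tendsto_atTop]
    intro b
    set b' := max b (M+1) with hb'
    have hb'M : M < b' := lt_max_of_lt_right (by linarith)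
    have hLb' : 0 < L b' := hLpos b' hb'M
    filter_upwards [Ioo_mem_nhdsGT_of_mem ⟨le_refl (0:ℝ), hLb'⟩] with x hx
    exact ((le_max_left _ _).trans (hΛlt x b' hx.1 hb'M hx.2).le)
  have part2 : Tendsto (deriv (deriv G)) (𝓝[>] (0:ℝ)) (𝓝 (1/(2*S))) := by
    refine Tendsto.congr' ?_ (hHtend.comp hΛtop)
    filter_upwards [self_mem_nhdsWithin] with x hx
    exact (hval2 x hx).symm
  -- limit at infinity
  have part3 : Tendsto (deriv (deriv G)) atTop (𝓝 0) := by
    have hb : Tendsto (fun x : ℝ => (M+1-m)/M^2 * (1/x)) atTop (𝓝 0) := by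
      have h1 : Tendsto (fun x : ℝ => 1/x) atTop (𝓝 0) := by
        simpa using tendsto_inv_atTop_zero
      have := h1.const_mul ((M+1-m)/M^2)
      simpa using this
    refine tendsto_of_tendsto_of_tendsto_of_le_of_le' (g := fun _ => (0:ℝ))
      tendsto_const_nhds hb ?_ ?_
    · filter_upwards [eventually_gt_atTop (0:ℝ)] with x hx
      rw [hval2 x hx]
      have hI2p := hI2pos (Λ x) (hΛmem x hx)
      have hΛp := hΛpos x hx
      positivity
    · filter_upwards [eventually_gt_atTop (0:ℝ), eventually_ge_atTop (L (M+1))] with x hx hxL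
      rw [hval2 x hx]
      set l := Λ x with hldef
      have hlM : M < l := hΛmem x hx
      have hlub : l ≤ M + 1 := by
        by_contra h
        push_neg at h
        have h2 := hLanti (mem_Ioi.2 (by linarith : M < M+1)) (mem_Ioi.2 hlM) h
        rw [hΛright x hx] at h2
        linarith
      have hlm0 : 0 < l - m := by linarith
      have hMm : 0 < M + 1 - m := by linarith
      have hxI2 : x/(l - m) ≤ I2 l := by
        have := hI2Llb l hlM
        rwa [hΛright x hx] at this
      have h1 : M^2 * (x/(M+1-m)) ≤ l^2 * I2 l := by
        calc M^2 * (x/(M+1-m)) ≤ M^2 * (x/(l-m)) := by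
              gcongr
          _ ≤ l^2 * (x/(l-m)) := by
              have hxd : 0 ≤ x/(l-m) := by positivity
              gcongr
          _ ≤ l^2 * I2 l := by gcongr
      have e : (M^2 * (x/(M+1-m)))⁻¹ = (M+1-m)/M^2 * (1/x) := by
        field_simp
      rw [← e]
      exact inv_anti₀ (by positivity) h1
  exact ⟨part1, part2, part3⟩
end
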